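/- Let σ^E, σ^I, γ^E, γ^I ∈ (0,1) and φ ≥ 0. Consider the 2×2 real matrices F = [[0, σ^E φ],[0, 0]] and T = [[σ^E(1−γ^E), 0],[σ^I γ^E, σ^I(1−γ^I)]]. Then Id − T is invertible and the spectral radius of the next-generation matrix Q = F(Id − T)^{-1} equals σ^E σ^I γ^E φ / ((1 − σ^E(1−γ^E))(1 − σ^I(1−γ^I))). -/

import Mathlib

open scoped ENNReal

lemma spectrum_aux (a b : ℂ) :
    spectrum ℂ (Matrix.of ![![a, b], ![0, 0]] : Matrix (Fin 2) (Fin 2) ℂ) = {0, a} := by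
  ext z
  rw [spectrum.mem_iff, Matrix.isUnit_iff_isUnit_det, isUnit_iff_ne_zero, not_not]
  have : (algebraMap ℂ (Matrix (Fin 2) (Fin 2) ℂ) z - Matrix.of ![![a, b], ![0, 0]]).det
      = (z - a) * z := by
    rw [Matrix.det_fin_two]
    simp [Matrix.algebraMap_matrix_apply]
  rw [this]
  simp [mul_eq_zero, sub_eq_zero, Set.mem_insert_iff, or_comm, eq_comm]

lemma sr_aux (a b : ℝ) (ha : 0 ≤ a) :
    spectralRadius ℂ (Matrix.of ![![(a:ℂ), (b:ℂ)], ![0, 0]] : Matrix (Fin 2) (Fin 2) ℂ)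
      = ENNReal.ofReal a := by
  rw [spectralRadius, spectrum_aux, iSup_pair]
  simp [← Real.enorm_eq_ofReal ha]
  rfl

/-- the next-generation matrix `Q = F (Id - T)⁻¹` is well defined
(`Id - T` is invertible) and its spectral radius is
`σE σI γE φ / ((1 - σE(1-γE))(1 - σI(1-γI)))`, the basic reproduction number (10). -/
theorem next_generation_spectral_radius
    (σE σI γE γI φ : ℝ)
    (hσE : σE ∈ Set.Ioo (0:ℝ) 1) (hσI : σI ∈ Set.Ioo (0:ℝ) 1)
    (hγE : γE ∈ Set.Ioo (0:ℝ) 1) (hγI : γI ∈ Set.Ioo (0:ℝ) 1)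
    (hφ : 0 ≤ φ)
    (F T : Matrix (Fin 2) (Fin 2) ℝ)
    (hF : F = Matrix.of ![![0, σE * φ], ![0, 0]])
    (hT : T = Matrix.of ![![σE * (1 - γE), 0], ![σI * γE, σI * (1 - γI)]]) :
    IsUnit (1 - T) ∧
    spectralRadius ℂ ((F * (1 - T)⁻¹).map (algebraMap ℝ ℂ)) =
      ENNReal.ofReal (σE * σI * γE * φ /
        ((1 - σE * (1 - γE)) * (1 - σI * (1 - γI)))) := by
  obtain ⟨hσE0, hσE1⟩ := hσE
  obtain ⟨hσI0, hσI1⟩ := hσI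
  obtain ⟨hγE0, hγE1⟩ := hγE
  obtain ⟨hγI0, hγI1⟩ := hγI
  set d1 : ℝ := 1 - σE * (1 - γE) with hd1
  set d2 : ℝ := 1 - σI * (1 - γI) with hd2
  have hd1pos : 0 < d1 := by nlinarith
  have hd2pos : 0 < d2 := by nlinarith
  have hdet : (1 - T).det = d1 * d2 := by
    subst hT
    rw [Matrix.det_fin_two]
    simp [Matrix.one_apply]
    rfl
  have hunit : IsUnit (1 - T) := by
    rw [Matrix.isUnit_iff_isUnit_det, hdet, isUnit_iff_ne_zero]
    positivity
  -- explicit inverse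
  have hinv : (1 - T)⁻¹ = Matrix.of ![![1/d1, 0], ![σI * γE / (d1 * d2), 1/d2]] := by
    apply Matrix.inv_eq_right_inv
    subst hT
    ext i j
    fin_cases i <;> fin_cases j <;>
      simp [Matrix.mul_apply, Fin.sum_univ_two, Matrix.one_apply] <;>
      field_simp <;> ring
  set a : ℝ := σE * σI * γE * φ / (d1 * d2) with hadef
  have ha : 0 ≤ a := by positivity
  have hQ : F * (1 - T)⁻¹ = Matrix.of ![![a, σE * φ / d2], ![0, 0]] := by
    rw [hinv, hF]
    ext i j
    fin_cases i <;> fin_cases j <;>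
      simp [Matrix.mul_apply, Fin.sum_univ_two, hadef] <;> ring
  refine ⟨hunit, ?_⟩
  have hmap : (F * (1 - T)⁻¹).map (algebraMap ℝ ℂ)
      = Matrix.of ![![(a:ℂ), ((σE * φ / d2 : ℝ):ℂ)], ![0, 0]] := by
    rw [hQ]
    ext i j
    fin_cases i <;> fin_cases j <;> simp
  rw [hmap, sr_aux a _ ha, hadef]
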